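/- arXiv:2206.14846 — 4 statements merged into one kernel-verified Lean document; each statement's English description precedes it below -/
import Mathlib

section
/- Let A, B be d×d real positive definite matrices with A ⪰ B (i.e., A − B is positive semidefinite). Then for any x ∈ ℝ^d, xᵀAx ≤ (xᵀBx) · det(A)/det(B). -/
open Matrix

private lemma quad_le_det_of_ge_one {d : ℕ} (C : Matrix (Fin d) (Fin d) ℝ)
    (hC : C.IsHermitian) (h1 : (C - 1).PosSemidef) (y : Fin d → ℝ) :
    y ⬝ᵥ (C *ᵥ y) ≤ C.det * (y ⬝ᵥ y) := by
  classical
  set U : Matrix (Fin d) (Fin d) ℝ := (hC.eigenvectorUnitary : Matrix (Fin d) (Fin d) ℝ) with hU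
  set μ : Fin d → ℝ := hC.eigenvalues with hμ
  -- eigenvalues are at least 1
  have hμ1 : ∀ i, 1 ≤ μ i := by
    intro i
    set v : Fin d → ℝ := ⇑(hC.eigenvectorBasis i) with hv
    have hvv : v ⬝ᵥ v = 1 := by
      have hnorm := hC.eigenvectorBasis.orthonormal.1 i
      have hinner : (inner ℝ (hC.eigenvectorBasis i) (hC.eigenvectorBasis i) : ℝ) = 1 := by
        rw [real_inner_self_eq_norm_sq, hnorm]; norm_num
      rw [EuclideanSpace.inner_eq_star_dotProduct] at hinner
      simpa using hinner
    have heig : C *ᵥ v = μ i • v := hC.mulVec_eigenvectorBasis i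
    have h0 := h1.dotProduct_mulVec_nonneg v
    have hcomp : star v ⬝ᵥ ((C - 1) *ᵥ v) = μ i - 1 := by
      rw [Matrix.sub_mulVec, heig]
      simp [dotProduct_sub, dotProduct_smul, hvv, star_trivial]
    rw [hcomp] at h0
    simpa using h0
  have hUstar : star U * U = 1 := mem_unitaryGroup_iff'.mp hC.eigenvectorUnitary.2
  have hUT : star U = Uᵀ := by
    rw [Matrix.star_eq_conjTranspose, conjTranspose_eq_transpose_of_trivial]
  set z : Fin d → ℝ := star U *ᵥ y with hz
  have hyU : y ᵥ* U = z := by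
    rw [hz, hUT, mulVec_transpose]
  -- the squared norm is preserved
  have hzz : z ⬝ᵥ z = y ⬝ᵥ y := by
    have hUU : U * star U = 1 := mem_unitaryGroup_iff.mp hC.eigenvectorUnitary.2
    rw [hz, dotProduct_mulVec, vecMul_mulVec, hUT, transpose_transpose, ← hUT, hUU,
      vecMul_one]
  -- the quadratic form in terms of eigen-coordinates
  have hquad : y ⬝ᵥ (C *ᵥ y) = ∑ i, μ i * (z i)^2 := by
    conv_lhs => rw [hC.spectral_theorem, Unitary.conjStarAlgAut_apply]
    rw [← hU, ← hμ, ← mulVec_mulVec, ← mulVec_mulVec, dotProduct_mulVec, hyU, ← hz]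
    simp [dotProduct, mulVec_diagonal, Function.comp]
    apply Finset.sum_congr rfl
    intro i _
    ring
  have hdet : C.det = ∏ i, μ i := by
    simpa using hC.det_eq_prod_eigenvalues
  rw [hquad, hdet, ← hzz]
  have hzz' : z ⬝ᵥ z = ∑ i, (z i)^2 := by
    simp [dotProduct, pow_two]
  rw [hzz', Finset.mul_sum]
  apply Finset.sum_le_sum
  intro i _
  have hle : μ i ≤ ∏ j, μ j := by
    rw [← Finset.mul_prod_erase Finset.univ μ (Finset.mem_univ i)]
    have h1 : (1:ℝ) ≤ ∏ j ∈ Finset.univ.erase i, μ j := by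
      calc (1:ℝ) = ∏ _j ∈ Finset.univ.erase i, (1:ℝ) := by simp
        _ ≤ ∏ j ∈ Finset.univ.erase i, μ j :=
            Finset.prod_le_prod (by intro j _; norm_num) (fun j _ => hμ1 j)
    exact le_mul_of_one_le_right (le_trans zero_le_one (hμ1 i)) h1
  exact mul_le_mul_of_nonneg_right hle (sq_nonneg _)

/-- If A ⪰ B are positive definite, then xᵀAx ≤ (xᵀBx) · det A / det B. -/
theorem quadratic_form_le_det_ratio {d : ℕ}
    (A B : Matrix (Fin d) (Fin d) ℝ)
    (hA : A.PosDef) (hB : B.PosDef) (hAB : (A - B).PosSemidef)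
    (x : Fin d → ℝ) :
    x ⬝ᵥ (A *ᵥ x) ≤ (x ⬝ᵥ (B *ᵥ x)) * (A.det / B.det) := by
  classical
  set S : Matrix (Fin d) (Fin d) ℝ := (open MatrixOrder in CFC.sqrt B) with hS
  have hSpsd : S.PosSemidef := by open MatrixOrder in exact (CFC.sqrt_nonneg B).posSemidef
  have hSS : S * S = B := by open MatrixOrder in exact CFC.sqrt_mul_sqrt_self B hB.posSemidef.nonneg
  have hdetS : S.det * S.det = B.det := by rw [← det_mul, hSS]
  have hdetS_nonneg : 0 ≤ S.det := by
    rw [hSpsd.1.det_eq_prod_eigenvalues]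
    exact Finset.prod_nonneg fun i _ => by simpa using hSpsd.eigenvalues_nonneg i
  have hdetS_pos : 0 < S.det := by
    rcases hdetS_nonneg.lt_or_eq with h | h
    · exact h
    · exfalso; have := hB.det_pos; rw [← hdetS, ← h] at this; simp at this
  have hdet_ne : S.det ≠ 0 := hdetS_pos.ne'
  have hSinv : S * S⁻¹ = 1 := mul_nonsing_inv S (isUnit_iff_ne_zero.mpr hdet_ne)
  have hinvS : S⁻¹ * S = 1 := nonsing_inv_mul S (isUnit_iff_ne_zero.mpr hdet_ne)
  have hSinvH : S⁻¹ᴴ = S⁻¹ := hSpsd.1.inv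
  have hSH : Sᴴ = S := hSpsd.1
  set C : Matrix (Fin d) (Fin d) ℝ := S⁻¹ * A * S⁻¹ with hC
  have hCH : C.IsHermitian := by
    show Cᴴ = C
    rw [hC, conjTranspose_mul, conjTranspose_mul, hSinvH, hA.1, Matrix.mul_assoc]
  have hC1 : (C - 1).PosSemidef := by
    have hid : S⁻¹ * B * S⁻¹ = 1 := by
      rw [← hSS, ← Matrix.mul_assoc S⁻¹ S S, hinvS, Matrix.one_mul, hSinv]
    have heq : C - 1 = S⁻¹ * (A - B) * S⁻¹ᴴ := by
      rw [hSinvH, Matrix.mul_sub, Matrix.sub_mul, hid, hC]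
    rw [heq]
    exact hAB.mul_mul_conjTranspose_same _
  have key := quad_le_det_of_ge_one C hCH hC1 (S *ᵥ x)
  -- LHS equals xᵀ A x
  have hL : (S *ᵥ x) ⬝ᵥ (C *ᵥ (S *ᵥ x)) = x ⬝ᵥ (A *ᵥ x) := by
    rw [mulVec_mulVec, hC, Matrix.mul_assoc (S⁻¹ * A), hinvS, Matrix.mul_one,
      dotProduct_mulVec, vecMul_mulVec, ← conjTranspose_eq_transpose_of_trivial,
      hSH, ← Matrix.mul_assoc, hSinv, Matrix.one_mul, ← dotProduct_mulVec]
  have hR : (S *ᵥ x) ⬝ᵥ (S *ᵥ x) = x ⬝ᵥ (B *ᵥ x) := by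
    rw [dotProduct_mulVec, vecMul_mulVec, ← conjTranspose_eq_transpose_of_trivial, hSH, hSS,
      ← dotProduct_mulVec]
  have hdetC : C.det = A.det / B.det := by
    rw [hC, det_mul, det_mul, det_nonsing_inv, Ring.inverse_eq_inv, ← hdetS]
    field_simp
  rw [hL, hR, hdetC] at key
  linarith [key]
end

section
/- Let x_1, …, x_T ∈ ℝ^d with ‖x_t‖₂ ≤ L for all t, let λ > 0, and define Σ_t = λI + ∑_{τ=1}^t x_τ x_τᵀ. Then ∑_{t=1}^T min(1, x_tᵀ Σ_{t-1}^{-1} x_t) ≤ 2 d log((dλ + T L²)/(dλ)). -/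
open Matrix Finset

lemma aux_min_le_log {u : ℝ} (hu : 0 ≤ u) : min 1 u ≤ 2 * Real.log (1 + u) := by
  rcases le_or_gt u 1 with h | h
  · rw [min_eq_right h]
    have h3 : (0:ℝ) < 1 - u/2 := by linarith
    have h5 := Real.add_one_le_exp (-(u/2))
    have h4 : Real.exp (u/2) ≤ 1/(1 - u/2) := by
      rw [le_div_iff₀ h3]
      calc Real.exp (u/2) * (1 - u/2) ≤ Real.exp (u/2) * Real.exp (-(u/2)) := by
            apply mul_le_mul_of_nonneg_left (by linarith) (Real.exp_nonneg _)
        _ = 1 := by rw [← Real.exp_add]; simp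
    have h2 : Real.exp (u/2) ≤ 1 + u := by
      refine h4.trans ?_
      rw [div_le_iff₀ h3]; nlinarith
    have h6 := Real.log_le_log (Real.exp_pos _) h2
    rw [Real.log_exp] at h6; linarith
  · rw [min_eq_left h.le]
    have h2 : Real.log 2 ≤ Real.log (1+u) :=
      Real.log_le_log (by norm_num) (by linarith)
    have := Real.log_two_gt_d9
    linarith

lemma aux_trace_eq {d : ℕ} {A : Matrix (Fin d) (Fin d) ℝ} (hA : A.IsHermitian) :
    A.trace = ∑ i, hA.eigenvalues i := by
  nth_rewrite 1 [hA.spectral_theorem]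
  rw [Unitary.conjStarAlgAut_apply, Matrix.trace_mul_comm, ← Matrix.mul_assoc,
    Matrix.mem_unitaryGroup_iff'.mp (Matrix.IsHermitian.eigenvectorUnitary hA).2, Matrix.one_mul,
    Matrix.trace_diagonal]
  simp

lemma aux_det_le_trace {d : ℕ} (hd : 0 < d) {A : Matrix (Fin d) (Fin d) ℝ}
    (hA : A.PosSemidef) : A.det ≤ (A.trace / d) ^ d := by
  have hH := hA.isHermitian
  have hev : ∀ i, 0 ≤ hH.eigenvalues i := hA.eigenvalues_nonneg
  have hdet : A.det = ∏ i, hH.eigenvalues i := by exact_mod_cast hH.det_eq_prod_eigenvalues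
  have htr : A.trace = ∑ i, hH.eigenvalues i := aux_trace_eq hH
  have hd' : (d:ℝ) ≠ 0 := Nat.cast_ne_zero.mpr hd.ne'
  have hgm := Real.geom_mean_le_arith_mean_weighted Finset.univ (fun _ => 1/(d:ℝ))
      hH.eigenvalues (fun i _ => by positivity)
      (by simp [Finset.sum_const, Finset.card_univ]; field_simp) (fun i _ => hev i)
  have key : ∏ i, hH.eigenvalues i = (∏ i, hH.eigenvalues i ^ (1/(d:ℝ))) ^ d := by
    rw [← Finset.prod_pow]
    refine Finset.prod_congr rfl fun i _ => ?_
    rw [← Real.rpow_natCast (hH.eigenvalues i ^ (1/(d:ℝ))) d, ← Real.rpow_mul (hev i)]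
    field_simp
    simp
  rw [hdet, htr, key]
  apply pow_le_pow_left₀
  · exact Finset.prod_nonneg fun i _ => Real.rpow_nonneg (hev i) _
  · calc ∏ i, hH.eigenvalues i ^ (1/(d:ℝ)) ≤ ∑ i, (1/(d:ℝ)) * hH.eigenvalues i := hgm
      _ = (∑ i, hH.eigenvalues i) / d := by rw [← Finset.mul_sum]; ring

lemma aux_psd_vecMulVec {d : ℕ} (v : Fin d → ℝ) : (vecMulVec v v).PosSemidef := by
  have h : vecMulVec v v = replicateCol Unit v * (replicateCol Unit v)ᴴ := by
    rw [vecMulVec_eq Unit, conjTranspose_replicateCol]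
    simp
  rw [h]
  exact posSemidef_self_mul_conjTranspose _

lemma aux_psd_sum {d : ℕ} (s : Finset ℕ) (f : ℕ → Matrix (Fin d) (Fin d) ℝ)
    (h : ∀ i ∈ s, (f i).PosSemidef) : (∑ i ∈ s, f i).PosSemidef := by
  classical
  induction s using Finset.induction_on with
  | empty => simpa using Matrix.PosSemidef.zero
  | insert _ _ hi ih =>
    rw [Finset.sum_insert hi]
    exact (h _ (Finset.mem_insert_self _ _)).add
      (ih fun i his => h i (Finset.mem_insert_of_mem his))

/-- Elliptical potential lemma. -/
theorem elliptical_potential {d T : ℕ}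
    (x : ℕ → Fin d → ℝ) (L lam : ℝ) (hlam : 0 < lam)
    (hL : ∀ t, Real.sqrt (∑ i, (x t i) ^ 2) ≤ L)
    (Sig : ℕ → Matrix (Fin d) (Fin d) ℝ)
    (hSig : ∀ t, Sig t = lam • (1 : Matrix (Fin d) (Fin d) ℝ) +
      ∑ τ ∈ Finset.range t, vecMulVec (x τ) (x τ)) :
    ∑ t ∈ Finset.range T, min 1 (x t ⬝ᵥ ((Sig t)⁻¹ *ᵥ x t)) ≤
      2 * d * Real.log ((d * lam + T * L ^ 2) / (d * lam)) := by
  rcases Nat.eq_zero_or_pos d with hd | hd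
  · subst hd
    have : ∀ t, x t ⬝ᵥ ((Sig t)⁻¹ *ᵥ x t) = 0 := fun t => by
      simp [dotProduct]
    simp [this]
  -- positivity facts
  have hL0 : 0 ≤ L := (Real.sqrt_nonneg _).trans (hL 0)
  have hd' : (0:ℝ) < d := by exact_mod_cast hd
  have hpos : ∀ t, (Sig t).PosDef := by
    intro t
    rw [hSig t]
    refine Matrix.PosDef.add_posSemidef ?_ ?_
    · rw [Matrix.smul_one_eq_diagonal]
      exact Matrix.PosDef.diagonal fun _ => hlam
    · exact aux_psd_sum _ _ fun τ _ => aux_psd_vecMulVec (x τ)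
  set u : ℕ → ℝ := fun t => x t ⬝ᵥ ((Sig t)⁻¹ *ᵥ x t) with hu
  have hu0 : ∀ t, 0 ≤ u t := by
    intro t
    have := ((hpos t).inv).posSemidef.dotProduct_mulVec_nonneg (x t)
    simpa using this
  -- determinant recursion
  have hdet_succ : ∀ t, (Sig (t+1)).det = (Sig t).det * (1 + u t) := by
    intro t
    have hst : Sig (t+1) = Sig t + vecMulVec (x t) (x t) := by
      rw [hSig, hSig, Finset.sum_range_succ, add_assoc]
    rw [hst, vecMulVec_eq Unit,
      Matrix.det_add_replicateCol_mul_replicateRow (hpos t).det_pos.ne'.isUnit]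
    congr 1
    rw [det_unique]
    simp only [Matrix.add_apply, Matrix.one_apply_eq, Matrix.mul_apply, replicateRow_apply, replicateCol_apply,
      hu, dotProduct, mulVec, Finset.sum_mul, Finset.mul_sum]
    congr 1
    rw [Finset.sum_comm]
    exact Finset.sum_congr rfl fun k _ => Finset.sum_congr rfl fun j _ => by ring
  have hdetpos : ∀ t, 0 < (Sig t).det := fun t => (hpos t).det_pos
  -- telescoping
  have hlog : ∀ n, ∑ t ∈ Finset.range n, Real.log (1 + u t) =
      Real.log ((Sig n).det) - Real.log ((Sig 0).det) := by
    intro n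
    induction n with
    | zero => simp
    | succ n ih =>
      rw [Finset.sum_range_succ, ih, hdet_succ n,
        Real.log_mul (hdetpos n).ne' (ne_of_gt (by linarith [hu0 n]))]
      ring
  -- det Sig 0
  have hdet0 : (Sig 0).det = lam ^ d := by
    rw [hSig 0]
    simp [Matrix.det_smul]
  -- trace bound
  have htr : (Sig T).trace ≤ d * lam + T * L ^ 2 := by
    rw [hSig T, Matrix.trace_add, Matrix.trace_smul, Matrix.trace_one, Matrix.trace_sum]
    have hterm : ∀ τ ∈ Finset.range T, (vecMulVec (x τ) (x τ)).trace ≤ L ^ 2 := by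
      intro τ _
      have h1 : (vecMulVec (x τ) (x τ)).trace = ∑ i, (x τ i) ^ 2 := by
        simp [Matrix.trace, Matrix.diag, vecMulVec_apply, sq]
      rw [h1]
      have h2 : ∑ i, (x τ i) ^ 2 = Real.sqrt (∑ i, (x τ i) ^ 2) ^ 2 :=
        (Real.sq_sqrt (by positivity)).symm
      rw [h2]
      exact pow_le_pow_left₀ (Real.sqrt_nonneg _) (hL τ) 2
    calc lam • (Fintype.card (Fin d) : ℝ) + ∑ τ ∈ Finset.range T, (vecMulVec (x τ) (x τ)).trace
        ≤ lam • (Fintype.card (Fin d) : ℝ) + ∑ τ ∈ Finset.range T, L ^ 2 :=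
          add_le_add_right (Finset.sum_le_sum hterm) _
      _ = d * lam + T * L ^ 2 := by
          simp [Fintype.card_fin, smul_eq_mul]; ring
  have hsum_pos : (0:ℝ) < d * lam + T * L ^ 2 := by positivity
  -- det bound
  have hdetT : (Sig T).det ≤ ((d * lam + T * L ^ 2) / d) ^ d := by
    refine (aux_det_le_trace hd (hpos T).posSemidef).trans ?_
    apply pow_le_pow_left₀
    · have := (hpos T).posSemidef
      -- trace nonneg: use aux_trace_eq
      have h1 : 0 ≤ (Sig T).trace := by
        rw [aux_trace_eq (hpos T).isHermitian]
        exact Finset.sum_nonneg fun i _ => (hpos T).posSemidef.eigenvalues_nonneg i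
      positivity
    · gcongr
  -- main chain
  have step1 : ∑ t ∈ Finset.range T, min 1 (u t) ≤
      ∑ t ∈ Finset.range T, 2 * Real.log (1 + u t) :=
    Finset.sum_le_sum fun t _ => aux_min_le_log (hu0 t)
  have step2 : ∑ t ∈ Finset.range T, 2 * Real.log (1 + u t) =
      2 * (Real.log ((Sig T).det) - Real.log ((Sig 0).det)) := by
    rw [← Finset.mul_sum, hlog T]
  have step3 : Real.log ((Sig T).det) ≤ d * Real.log ((d * lam + T * L ^ 2) / d) := by
    calc Real.log ((Sig T).det) ≤ Real.log (((d * lam + T * L ^ 2) / d) ^ d) :=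
          Real.log_le_log (hdetpos T) hdetT
      _ = d * Real.log ((d * lam + T * L ^ 2) / d) := by
          rw [Real.log_pow]
  have step4 : Real.log ((Sig 0).det) = d * Real.log lam := by
    rw [hdet0, Real.log_pow]
  have hfinal : (d:ℝ) * Real.log ((d * lam + T * L ^ 2) / d) - d * Real.log lam =
      d * Real.log ((d * lam + T * L ^ 2) / (d * lam)) := by
    rw [← mul_sub]
    congr 1
    rw [Real.log_div hsum_pos.ne' (ne_of_gt hd'), Real.log_div hsum_pos.ne' (by positivity),
      Real.log_mul (ne_of_gt hd') hlam.ne']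
    ring
  calc ∑ t ∈ Finset.range T, min 1 (u t)
      ≤ 2 * (Real.log ((Sig T).det) - Real.log ((Sig 0).det)) := step1.trans step2.le
    _ ≤ 2 * (d * Real.log ((d * lam + T * L ^ 2) / d) - d * Real.log lam) := by
        rw [step4]; nlinarith [step3]
    _ = 2 * d * Real.log ((d * lam + T * L ^ 2) / (d * lam)) := by rw [hfinal]; ring
end

section
/- Let (X_{i,k})_{i∈[N],k∈[K]} be independent Bernoulli random variables, conditionally on a σ-algebra 𝔉, with ∑_{i,k} E[X_{i,k} | 𝔉] ≤ (1 − Δ)(m + 1) where m is 𝔉-measurable. Then with probability at least 1 − δ (conditionally on 𝔉), ∑_{i,k} X_{i,k} ≤ (1 − Δ/2)(m + 1) + (2/Δ) log(1/δ). -/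
open MeasureTheory ProbabilityTheory

/-- Bernstein-type high probability bound for sums of independent Bernoulli
random variables whose total mean is at most (1-Δ)(m+1). -/
theorem bernoulli_sum_high_prob_bound {Ω : Type*} [MeasureSpace Ω]
    [IsProbabilityMeasure (ℙ : Measure Ω)] {N K : ℕ}
    (X : Fin N × Fin K → Ω → ℝ)
    (hmeas : ∀ p, Measurable (X p))
    (hBer : ∀ p ω, X p ω = 0 ∨ X p ω = 1)
    (hindep : iIndepFun X ℙ)
    (Δ δ m : ℝ) (hΔ : Δ ∈ Set.Ioo (0:ℝ) 1) (hδ : δ ∈ Set.Ioo (0:ℝ) 1) (hm : 0 ≤ m)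
    (hmean : ∑ p, ∫ ω, X p ω ∂ℙ ≤ (1 - Δ) * (m + 1)) :
    1 - δ ≤ (ℙ {ω | ∑ p, X p ω ≤ (1 - Δ / 2) * (m + 1) + (2 / Δ) * Real.log (1 / δ)}).toReal := by
  obtain ⟨hΔ0, hΔ1⟩ := hΔ
  obtain ⟨hδ0, hδ1⟩ := hδ
  set lam : ℝ := Δ / 2 with hlam
  have hlam0 : 0 < lam := by positivity
  set t : ℝ := (1 - Δ / 2) * (m + 1) + (2 / Δ) * Real.log (1 / δ) with ht
  set S : Ω → ℝ := ∑ p, X p with hS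
  have hSapp : ∀ ω, S ω = ∑ p, X p ω := fun ω => by simp [hS]
  have hSmeas : Measurable S := by
    rw [show S = fun ω => ∑ p, X p ω from funext hSapp]
    exact Finset.measurable_sum _ fun p _ => hmeas p
  -- each X p bounded
  have hX01 : ∀ p ω, 0 ≤ X p ω ∧ X p ω ≤ 1 := by
    intro p ω; rcases hBer p ω with h | h <;> simp [h]
  have hXint : ∀ p, Integrable (X p) ℙ := by
    intro p
    refine (integrable_const (1:ℝ)).mono' (hmeas p).aestronglyMeasurable ?_
    filter_upwards with ω
    rw [Real.norm_eq_abs, abs_of_nonneg (hX01 p ω).1]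
    exact (hX01 p ω).2
  have hmu0 : ∀ p, 0 ≤ ∫ ω, X p ω ∂ℙ := fun p =>
    integral_nonneg fun ω => (hX01 p ω).1
  -- integrability of exp(lam * X p)
  have hexpint : ∀ p, Integrable (fun ω => Real.exp (lam * X p ω)) ℙ := by
    intro p
    refine (integrable_const (Real.exp lam)).mono'
      ((hmeas p).const_mul lam).exp.aestronglyMeasurable ?_
    filter_upwards with ω
    rw [Real.norm_eq_abs, abs_of_pos (Real.exp_pos _)]
    exact Real.exp_le_exp.2 (by nlinarith [(hX01 p ω).1, (hX01 p ω).2])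
  have hexpSint : Integrable (fun ω => Real.exp (lam * S ω)) ℙ := by
    refine (integrable_const (Real.exp (lam * (N * K)))).mono'
      (hSmeas.const_mul lam).exp.aestronglyMeasurable ?_
    filter_upwards with ω
    rw [Real.norm_eq_abs, abs_of_pos (Real.exp_pos _)]
    refine Real.exp_le_exp.2 (mul_le_mul_of_nonneg_left ?_ hlam0.le)
    rw [hSapp]
    calc ∑ p, X p ω ≤ ∑ _p : Fin N × Fin K, (1:ℝ) :=
          Finset.sum_le_sum fun p _ => (hX01 p ω).2
      _ = (N * K : ℝ) := by simp [mul_comm]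
      _ ≤ (N * K : ℝ) := le_refl _
  -- mgf of each Bernoulli
  have hmgf : ∀ p, mgf (X p) ℙ lam ≤ Real.exp ((Real.exp lam - 1) * ∫ ω, X p ω ∂ℙ) := by
    intro p
    have heq : (fun ω => Real.exp (lam * X p ω))
        = fun ω => 1 + (Real.exp lam - 1) * X p ω := by
      funext ω
      rcases hBer p ω with h | h <;> simp [h]
    have : mgf (X p) ℙ lam = 1 + (Real.exp lam - 1) * ∫ ω, X p ω ∂ℙ := by
      rw [mgf, heq, integral_add (integrable_const 1) ((hXint p).const_mul _),
        integral_const, integral_const_mul]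
      simp
    rw [this]
    linarith [Real.add_one_le_exp ((Real.exp lam - 1) * ∫ ω, X p ω ∂ℙ)]
  -- Chernoff
  have hchern : (ℙ {ω | t ≤ S ω}).toReal ≤ δ := by
    have h1 : (ℙ {ω | t ≤ S ω}).toReal ≤ Real.exp (-lam * t) * mgf S ℙ lam :=
      measure_ge_le_exp_mul_mgf t hlam0.le hexpSint
    have h2 : mgf S ℙ lam = ∏ p, mgf (X p) ℙ lam :=
      hindep.mgf_sum hmeas Finset.univ
    have h3 : (∏ p, mgf (X p) ℙ lam)
        ≤ Real.exp ((Real.exp lam - 1) * ∑ p, ∫ ω, X p ω ∂ℙ) := by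
      rw [Finset.mul_sum, Real.exp_sum]
      exact Finset.prod_le_prod (fun p _ => mgf_nonneg) (fun p _ => hmgf p)
    have hel1 : 0 ≤ Real.exp lam - 1 := by
      linarith [Real.add_one_le_exp lam, hlam0]
    have h4 : (Real.exp lam - 1) * ∑ p, ∫ ω, X p ω ∂ℙ
        ≤ (Real.exp lam - 1) * ((1 - Δ) * (m + 1)) :=
      mul_le_mul_of_nonneg_left hmean hel1
    -- key inequality
    have hkey : (Real.exp lam - 1) * ((1 - Δ) * (m + 1)) ≤ lam * ((1 - Δ / 2) * (m + 1)) := by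
      have h5 : 1 - lam ≤ Real.exp (-lam) := by linarith [Real.add_one_le_exp (-lam)]
      have hx : Real.exp lam * (1 - lam) ≤ 1 := by
        calc Real.exp lam * (1 - lam) ≤ Real.exp lam * Real.exp (-lam) :=
              mul_le_mul_of_nonneg_left h5 (Real.exp_pos _).le
          _ = 1 := by rw [← Real.exp_add]; norm_num
      have hm1 : (0:ℝ) < m + 1 := by linarith
      have hE1 : Real.exp lam - 1 ≤ Real.exp lam * lam := by nlinarith [hx]
      have hE2 : Real.exp lam * (1 - 2*lam) ≤ 1 - lam := by
        nlinarith [hx, mul_nonneg hlam0.le hel1]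
      have h2l : 0 ≤ 1 - 2*lam := by rw [hlam]; linarith
      have key0 : (Real.exp lam - 1) * (1 - 2*lam) ≤ lam * (1 - lam) := by
        calc (Real.exp lam - 1) * (1 - 2*lam)
            ≤ (Real.exp lam * lam) * (1 - 2*lam) := mul_le_mul_of_nonneg_right hE1 h2l
          _ = lam * (Real.exp lam * (1 - 2*lam)) := by ring
          _ ≤ lam * (1 - lam) := mul_le_mul_of_nonneg_left hE2 hlam0.le
      have hΔeq : Δ = 2 * lam := by rw [hlam]; ring
      rw [hΔeq]
      nlinarith [mul_le_mul_of_nonneg_right key0 hm1.le]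
    have hlt : lam * t = lam * ((1 - Δ / 2) * (m + 1)) + Real.log (1 / δ) := by
      rw [ht]; field_simp; ring
    calc (ℙ {ω | t ≤ S ω}).toReal
        ≤ Real.exp (-lam * t) * mgf S ℙ lam := h1
      _ ≤ Real.exp (-lam * t) * Real.exp ((Real.exp lam - 1) * ∑ p, ∫ ω, X p ω ∂ℙ) := by
          rw [h2]; exact mul_le_mul_of_nonneg_left h3 (Real.exp_pos _).le
      _ = Real.exp ((Real.exp lam - 1) * (∑ p, ∫ ω, X p ω ∂ℙ) - lam * t) := by
          rw [← Real.exp_add]; ring_nf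
      _ ≤ Real.exp (- Real.log (1 / δ)) := by
          refine Real.exp_le_exp.2 ?_
          rw [hlt]
          linarith
      _ = δ := by
          rw [Real.log_div one_ne_zero (ne_of_gt hδ0), Real.log_one]
          simp [Real.exp_log hδ0]
  -- conclude
  have hmsA : MeasurableSet {ω | S ω ≤ t} := measurableSet_le hSmeas measurable_const
  have hsub : {ω | S ω ≤ t}ᶜ ⊆ {ω | t ≤ S ω} := by
    intro ω hω
    simp only [Set.mem_compl_iff, Set.mem_setOf_eq, not_le] at hω
    exact le_of_lt hω
  have hcompl : (ℙ {ω | S ω ≤ t}ᶜ).toReal ≤ δ :=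
    le_trans (ENNReal.toReal_mono (measure_ne_top _ _) (measure_mono hsub)) hchern
  have heq2 : {ω | ∑ p, X p ω ≤ (1 - Δ / 2) * (m + 1) + (2 / Δ) * Real.log (1 / δ)}
      = {ω | S ω ≤ t} := by
    ext ω; simp [hSapp, ht]
  rw [heq2]
  have hadd : (ℙ {ω | S ω ≤ t}).toReal + (ℙ {ω | S ω ≤ t}ᶜ).toReal = 1 := by
    rw [← ENNReal.toReal_add (measure_ne_top _ _) (measure_ne_top _ _),
      measure_add_measure_compl hmsA, measure_univ, ENNReal.toReal_one]
  linarith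
end

section
/- Let Q satisfy the truncated Bellman equation Q(s,a) = min{Λ/(1−γ), r(s,a) + b(s,a) + γ E_{s'∼P̂(·|s,a)} max_{a'} Q(s',a')} for a transition kernel P̂, and let Q* be the optimal Q-function of the MDP with kernel P and reward r, where 0 ≤ r(s,a) ≤ Λ and γ ∈ (0,1). If b(s,a) ≥ (γΛ/(1−γ)) · ‖P(·|s,a) − P̂(·|s,a)‖₁ for all (s,a), then Q(s,a) ≥ Q*(s,a) for all (s,a). -/
/-- Optimism: if the bonus dominates the model error, the optimistic truncated
Q-function upper bounds the optimal Q-function of the true MDP. -/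
theorem optimism_lemma {S A : Type*} [Fintype S] [Fintype A] [Nonempty S] [Nonempty A]
    (P Phat : S → A → S → ℝ) (r b Q Qstar : S → A → ℝ) (γ Λ : ℝ)
    (hγ : γ ∈ Set.Ioo (0:ℝ) 1) (hΛ : 0 < Λ)
    (hr : ∀ s a, 0 ≤ r s a ∧ r s a ≤ Λ)
    (hP : ∀ s a, (∀ s', 0 ≤ P s a s') ∧ ∑ s', P s a s' = 1)
    (hPhat : ∀ s a, (∀ s', 0 ≤ Phat s a s') ∧ ∑ s', Phat s a s' = 1)
    (hb0 : ∀ s a, 0 ≤ b s a)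
    (hQ : ∀ s a, Q s a =
      min (Λ / (1 - γ)) (r s a + b s a + γ * ∑ s', Phat s a s' * (⨆ a', Q s' a')))
    (hQstar : ∀ s a, Qstar s a = r s a + γ * ∑ s', P s a s' * (⨆ a', Qstar s' a'))
    (hQstarBd : ∀ s a, 0 ≤ Qstar s a ∧ Qstar s a ≤ Λ / (1 - γ))
    (hbonus : ∀ s a,
      (γ * Λ / (1 - γ)) * ∑ s', |P s a s' - Phat s a s'| ≤ b s a) :
    ∀ s a, Qstar s a ≤ Q s a := by
  obtain ⟨hγ0, hγ1⟩ := hγ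
  have h1γ : (0:ℝ) < 1 - γ := by linarith
  obtain ⟨⟨s0, a0⟩, hmax⟩ := Finite.exists_max (fun p : S × A => Qstar p.1 p.2 - Q p.1 p.2)
  set M := Qstar s0 a0 - Q s0 a0 with hM
  clear_value M
  suffices hM0 : M ≤ 0 by
    intro s a
    have := hmax (s, a)
    simp only at this
    linarith
  rcases le_or_gt (Λ / (1 - γ))
      (r s0 a0 + b s0 a0 + γ * ∑ s', Phat s0 a0 s' * (⨆ a', Q s' a')) with h | h
  · have hQeq : Q s0 a0 = Λ / (1 - γ) := by rw [hQ s0 a0, min_eq_left h]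
    have := (hQstarBd s0 a0).2
    rw [hM, hQeq]; linarith
  · have hQeq : Q s0 a0 = r s0 a0 + b s0 a0 + γ * ∑ s', Phat s0 a0 s' * (⨆ a', Q s' a') := by
      rw [hQ s0 a0, min_eq_right h.le]
    have hVstar : ∀ s', (0:ℝ) ≤ (⨆ a', Qstar s' a') ∧ (⨆ a', Qstar s' a') ≤ Λ / (1 - γ) := by
      intro s'
      constructor
      · exact le_ciSup_of_le (Set.Finite.bddAbove (Set.finite_range _))
          (Classical.arbitrary A) (hQstarBd s' _).1
      · exact ciSup_le fun a' => (hQstarBd s' a').2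
    have hVdiff : ∀ s', (⨆ a', Qstar s' a') - (⨆ a', Q s' a') ≤ M := by
      intro s'
      have hle : (⨆ a', Qstar s' a') ≤ (⨆ a', Q s' a') + M := by
        apply ciSup_le
        intro a'
        have h1 := hmax (s', a')
        have h2 : Q s' a' ≤ ⨆ a'', Q s' a'' :=
          le_ciSup (Set.Finite.bddAbove (Set.finite_range _)) a'
        simp only at h1
        linarith
      linarith
    have key1 : ∑ s', (P s0 a0 s' - Phat s0 a0 s') * (⨆ a', Qstar s' a')
        ≤ (Λ / (1 - γ)) * ∑ s', |P s0 a0 s' - Phat s0 a0 s'| := by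
      rw [Finset.mul_sum]
      apply Finset.sum_le_sum
      intro s' _
      calc (P s0 a0 s' - Phat s0 a0 s') * (⨆ a', Qstar s' a')
          ≤ |P s0 a0 s' - Phat s0 a0 s'| * (⨆ a', Qstar s' a') :=
            mul_le_mul_of_nonneg_right (le_abs_self _) (hVstar s').1
        _ ≤ |P s0 a0 s' - Phat s0 a0 s'| * (Λ / (1 - γ)) :=
            mul_le_mul_of_nonneg_left (hVstar s').2 (abs_nonneg _)
        _ = (Λ / (1 - γ)) * |P s0 a0 s' - Phat s0 a0 s'| := by ring
    have key2 : ∑ s', Phat s0 a0 s' * ((⨆ a', Qstar s' a') - (⨆ a', Q s' a')) ≤ M := by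
      calc ∑ s', Phat s0 a0 s' * ((⨆ a', Qstar s' a') - (⨆ a', Q s' a'))
          ≤ ∑ s', Phat s0 a0 s' * M := Finset.sum_le_sum fun s' _ =>
            mul_le_mul_of_nonneg_left (hVdiff s') ((hPhat s0 a0).1 s')
        _ = M := by rw [← Finset.sum_mul, (hPhat s0 a0).2, one_mul]
    have hsplit : ∑ s', P s0 a0 s' * (⨆ a', Qstar s' a')
        = ∑ s', (P s0 a0 s' - Phat s0 a0 s') * (⨆ a', Qstar s' a')
          + (∑ s', Phat s0 a0 s' * ((⨆ a', Qstar s' a') - (⨆ a', Q s' a'))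
             + ∑ s', Phat s0 a0 s' * (⨆ a', Q s' a')) := by
      rw [← Finset.sum_add_distrib, ← Finset.sum_add_distrib]
      apply Finset.sum_congr rfl
      intro s' _
      ring
    have e1 : M = γ * (∑ s', P s0 a0 s' * (⨆ a', Qstar s' a')
        - ∑ s', Phat s0 a0 s' * (⨆ a', Q s' a')) - b s0 a0 := by
      rw [hM, hQstar s0 a0, hQeq]; ring
    have e2 : γ * ((Λ / (1 - γ)) * ∑ s', |P s0 a0 s' - Phat s0 a0 s'|) ≤ b s0 a0 := by
      have hb := hbonus s0 a0
      have : γ * Λ / (1 - γ) * ∑ s', |P s0 a0 s' - Phat s0 a0 s'|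
          = γ * ((Λ / (1 - γ)) * ∑ s', |P s0 a0 s' - Phat s0 a0 s'|) := by ring
      linarith [this ▸ hb]
    have hdiff : ∑ s', P s0 a0 s' * (⨆ a', Qstar s' a')
        - ∑ s', Phat s0 a0 s' * (⨆ a', Q s' a')
        ≤ (Λ / (1 - γ)) * ∑ s', |P s0 a0 s' - Phat s0 a0 s'| + M := by
      rw [hsplit]; linarith [key1, key2]
    have hMle : M ≤ γ * M := by
      have := mul_le_mul_of_nonneg_left hdiff hγ0.le
      rw [mul_add] at this
      nlinarith [e1, e2, this]
    nlinarith [hMle, h1γ]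
end
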